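/- Let S be a finite singleton-rich semigroup. For all s, t ∈ S one has s** = t** if and only if φ*(s) = φ*(t), where φ*(s) = {e ∈ E(S) | se = s} and s** denotes the kernel (minimal ideal) of the subsemigroup generated by φ*(s). -/
import Mathlib


open scoped Classical

/-- φ*(s): the idempotent right identities of `s`. -/
def rIds {S : Type*} [Mul S] (s : S) : Set S := {e | e * e = e ∧ s * e = s}

/-- φ⁺(s): the idempotent left identities of `s`. -/
def lIds {S : Type*} [Mul S] (s : S) : Set S := {e | e * e = e ∧ e * s = s}

/-- `x` is the (necessarily unique) element of a singleton kernel (minimal ideal) of the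
subsemigroup `T`: `{x}` is an ideal of `T`, hence the minimal ideal of `T`. -/
def IsKer {S : Type*} [Semigroup S] (T : Subsemigroup S) (x : S) : Prop :=
  x ∈ T ∧ ∀ a ∈ T, a * x = x ∧ x * a = x

/-- The natural partial order on idempotents: `e ≤ f` iff `ef = fe = e`. -/
def nle {S : Type*} [Mul S] (e f : S) : Prop := e * f = e ∧ f * e = e

/-- The relation `≪`: `s ≪ t` iff `s = s⁺ t s*`, where `sa s = s*` and `pl s = s⁺`. -/
def ll {S : Type*} [Mul S] (sa pl : S → S) (s t : S) : Prop := s = pl s * t * sa s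

/-- Every element of the closure of `rIds s` is a right identity of `s`. -/
lemma mul_closure_rIds {S : Type*} [Semigroup S] {s x : S}
    (hx : x ∈ Subsemigroup.closure (rIds s)) : s * x = s := by
  induction hx using Subsemigroup.closure_induction with
  | mem e he => exact he.2
  | mul a b _ _ ha hb => rw [← mul_assoc, ha, hb]

/-- A kernel element of `closure (rIds s)` is itself in `rIds s`. -/
lemma ker_mem_rIds {S : Type*} [Semigroup S] {s x : S}
    (hx : IsKer (Subsemigroup.closure (rIds s)) x) : x ∈ rIds s :=
  ⟨(hx.2 x hx.1).1, mul_closure_rIds hx.1⟩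

/-- In a finite singleton-rich semigroup, `s** = t**` iff `φ*(s) = φ*(t)`. -/
theorem stmt1 {S : Type*} [Semigroup S] [Fintype S] (sa : S → S)
    (hsa : ∀ s : S, IsKer (Subsemigroup.closure (rIds s)) (sa s)) (s t : S) :
    sa s = sa t ↔ rIds s = rIds t := by
  constructor
  · intro h
    have key : ∀ u v : S, sa u = sa v → ∀ e ∈ rIds u, e ∈ rIds v := by
      intro u v huv e he
      have h1 : sa u * e = sa u := ((hsa u).2 e (Subsemigroup.subset_closure he)).2
      have h2 : v * sa v = v := (ker_mem_rIds (hsa v)).2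
      refine ⟨he.1, ?_⟩
      calc v * e = v * sa v * e := by rw [h2]
        _ = v * (sa u * e) := by rw [huv, mul_assoc]
        _ = v * sa v := by rw [h1, huv]
        _ = v := h2
    exact Set.Subset.antisymm (fun e he => key s t h e he) (fun e he => key t s h.symm e he)
  · intro h
    have hs := hsa s
    have ht := hsa t
    rw [h] at hs
    have h1 : sa s * sa t = sa t := (ht.2 (sa s) hs.1).1
    have h2 : sa s * sa t = sa s := (hs.2 (sa t) ht.1).2
    rw [← h1, h2]
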